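/- The family ℐ = {A ∈ [λ]^{ℵ₀} : ∃α < κ such that for all n ∈ ω, the set {β ∈ A : [f_α > g_β] ⊆ n} is finite} is a P-ideal, where ⟨f_α : α < κ⟩, ⟨g_β : β < λ⟩ is a (κ,λ)-pregap with κ of uncountable cofinality and [f > g] denotes {k ∈ ω : f(k) > g(k)}. -/

import Mathlib

open Set Cardinal

/-- `f ≤* g`: `f n ≤ g n` for all but finitely many `n`. -/
def LeStar (f g : ℕ → ℕ) : Prop := {n | g n < f n}.Finite

/-- `(f, g)` (indexed by the ordinals below `κ.ord`, `lam.ord`) is a `(κ, λ)`-pregap. -/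
def IsPregap (κ lam : Cardinal.{0}) (f g : Ordinal → ℕ → ℕ) : Prop :=
  (∀ α < κ.ord, Monotone (f α)) ∧
  (∀ β < lam.ord, Monotone (g β)) ∧
  (∀ α₁ α₂ : Ordinal, α₁ ≤ α₂ → α₂ < κ.ord → LeStar (f α₁) (f α₂)) ∧
  (∀ β₁ β₂ : Ordinal, β₁ ≤ β₂ → β₂ < lam.ord → LeStar (g β₂) (g β₁)) ∧
  (∀ α < κ.ord, ∀ β < lam.ord, LeStar (f α) (g β))

/-- Monotonicity of the witness: if `α` witnesses `A` and `α ≤ α' < κ.ord`, then `α'` also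
witnesses `A`. -/
lemma witness_mono {κ lam : Cardinal.{0}} {f g : Ordinal → ℕ → ℕ}
    (hpre : IsPregap κ lam f g) {A : Set Ordinal} {α α' : Ordinal}
    (hαα' : α ≤ α') (hα' : α' < κ.ord)
    (hw : ∀ n : ℕ, {β ∈ A | {k | g β k < f α k} ⊆ Set.Iio n}.Finite) :
    ∀ n : ℕ, {β ∈ A | {k | g β k < f α' k} ⊆ Set.Iio n}.Finite := by
  intro n
  have hle : ({k | f α' k < f α k}).Finite := hpre.2.2.1 α α' hαα' hα'
  obtain ⟨m, hm⟩ : ∃ m, ∀ k ∈ {k | f α' k < f α k}, k < m := by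
    rcases hle.bddAbove with ⟨m, hm⟩
    exact ⟨m + 1, fun k hk => Nat.lt_succ_of_le (hm hk)⟩
  apply (hw (max n m)).subset
  rintro β ⟨hβA, hβ⟩
  refine ⟨hβA, fun k hk => ?_⟩
  simp only [Set.mem_Iio]
  rcases lt_or_ge (f α' k) (f α k) with h | h
  · exact lt_of_lt_of_le (hm k h) (le_max_right n m)
  · have : g β k < f α' k := lt_of_lt_of_le hk h
    exact lt_of_lt_of_le (hβ this) (le_max_left n m)

theorem witnessing_family_is_pIdeal (κ lam : Cardinal.{0})
    (hκcof : Cardinal.aleph0 < κ.ord.cof)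
    (f g : Ordinal → ℕ → ℕ) (hpre : IsPregap κ lam f g) :
    let I : Set (Set Ordinal) := {A | A ⊆ Set.Iio lam.ord ∧ A.Countable ∧
      ∃ α < κ.ord, ∀ n : ℕ, {β ∈ A | {k | g β k < f α k} ⊆ Set.Iio n}.Finite}
    (∀ A ∈ I, ∀ B ⊆ A, B ∈ I) ∧
    (∀ A ∈ I, ∀ B ∈ I, A ∪ B ∈ I) ∧
    (∀ Q ⊆ I, Q.Countable → ∃ A ∈ I, ∀ B ∈ Q, (B \ A).Finite) := by
  intro I
  have hκpos : (0 : Ordinal) < κ.ord := by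
    rcases eq_zero_or_pos κ.ord with h | h
    · rw [h, Ordinal.cof_zero] at hκcof
      exact absurd hκcof (by simp)
    · exact h
  have hempty : (∅ : Set Ordinal) ∈ I := by
    refine ⟨Set.empty_subset _, Set.countable_empty, 0, hκpos, fun n => ?_⟩
    apply Set.Finite.subset (Set.finite_empty)
    rintro β ⟨hβ, -⟩
    exact hβ
  refine ⟨?_, ?_, ?_⟩
  · -- closed under subsets
    rintro A ⟨hAl, hAc, α, hα, hw⟩ B hBA
    refine ⟨hBA.trans hAl, hAc.mono hBA, α, hα, fun n => (hw n).subset ?_⟩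
    rintro β ⟨hβB, hβ⟩
    exact ⟨hBA hβB, hβ⟩
  · -- closed under unions
    rintro A ⟨hAl, hAc, α, hα, hwA⟩ B ⟨hBl, hBc, α', hα', hwB⟩
    refine ⟨Set.union_subset hAl hBl, hAc.union hBc, max α α', max_lt hα hα', fun n => ?_⟩
    have h1 := witness_mono hpre (le_max_left α α') (max_lt hα hα') hwA n
    have h2 := witness_mono hpre (le_max_right α α') (max_lt hα hα') hwB n
    apply (h1.union h2).subset
    rintro β ⟨hβ, hc⟩
    rcases hβ with hβ | hβ
    · exact Or.inl ⟨hβ, hc⟩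
    · exact Or.inr ⟨hβ, hc⟩
  · -- P-ideal property
    intro Q hQI hQc
    rcases Q.eq_empty_or_nonempty with rfl | hQne
    · exact ⟨∅, hempty, by simp⟩
    obtain ⟨B, rfl⟩ := hQc.exists_eq_range hQne
    -- choose witnesses
    choose hBl hBc αs hαs hws using fun i => hQI (Set.mem_range_self i)
    -- bound the witnesses
    set α : Ordinal := ⨆ i, αs i with hαdef
    have hα : α < κ.ord := by
      apply Ordinal.iSup_lt_of_lt_cof _ hαs
      rwa [Cardinal.mk_nat]
    have hwα : ∀ i, ∀ n : ℕ,
        {β ∈ B i | {k | g β k < f α k} ⊆ Set.Iio n}.Finite := fun i =>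
      witness_mono hpre (Ordinal.le_iSup αs i) hα (hws i)
    -- the diagonal set
    set T : ℕ → Set Ordinal := fun i => {β ∈ B i | {k | g β k < f α k} ⊆ Set.Iio i} with hT
    set A : Set Ordinal := ⋃ i, B i \ T i with hA
    have hAmem : A ∈ I := by
      refine ⟨?_, ?_, α, hα, ?_⟩
      · exact Set.iUnion_subset fun i => (Set.diff_subset).trans (hBl i)
      · exact Set.countable_iUnion fun i => (hBc i).mono Set.diff_subset
      · intro n
        have : {β ∈ A | {k | g β k < f α k} ⊆ Set.Iio n} ⊆
            ⋃ i ∈ Finset.range n, {β ∈ B i | {k | g β k < f α k} ⊆ Set.Iio n} := by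
          rintro β ⟨hβA, hc⟩
          rcases Set.mem_iUnion.1 hβA with ⟨i, hβi, hβT⟩
          have hin : i < n := by
            by_contra hge
            push_neg at hge
            exact hβT ⟨hβi, fun k hk => lt_of_lt_of_le (hc hk) hge⟩
          exact Set.mem_biUnion (Finset.mem_range.2 hin) ⟨hβi, hc⟩
        exact (Set.Finite.biUnion (Finset.range n).finite_toSet
          (fun i _ => hwα i n)).subset this
    refine ⟨A, hAmem, ?_⟩
    rintro C ⟨i, rfl⟩
    apply (hwα i i).subset
    intro β hβ
    rcases hβ with ⟨hβi, hβA⟩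
    by_contra hβT
    exact hβA (Set.mem_iUnion.2 ⟨i, hβi, hβT⟩)
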